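/- Let m₁, m₂, n₁, n₂ > 0, ν₁₁, ν₁₂, ν₂₂, ν₂₁ > 0 with ν₁₂ = ε ν₂₁ for some 0 < ε ≤ 1, and δ ≤ 1, α ≤ 1. Define the diagonal operators on ℓ²(ℕ, ℂ): L₁₂ = L₂₂ = diag(0,0,0,1,1,…), L₁₃ = diag(0, 1−δ, 1−α, 1, 1, …), L₁₄ = diag(0, (1−δ)(n₁/n₂)√(m₁/m₂), (1−α)(n₁/n₂), 0, 0, …), L₂₃ = diag(0, (m₁/m₂) ε (1−δ), ε(1−α), 1, 1, …), L₂₄ = diag(0, (n₂/n₁)√(m₁/m₂) ε (1−δ), (n₂/n₁) ε (1−α), 0, 0, …). Suppose a, b : [0, ∞) → ℓ²(ℕ, ℂ) are differentiable and solve the zero-mode system a'(t) = − ν₁₁ n₁ L₁₂ a(t) − ν₁₂ n₂ L₁₃ a(t) + ν₁₂ n₂ L₁₄ b(t) and b'(t) = − ν₂₂ n₂ L₂₂ b(t) − ν₂₁ n₁ L₂₃ b(t) + ν₂₁ n₁ L₂₄ a(t), with initial data satisfying a₀(0) = b₀(0) = 0, √m₁ a₁(0) + √m₂ b₁(0) =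 0, and a₂(0) + b₂(0) = 0. Set C = 2 min{ ν₁₂ n₂ (1−δ), ν₁₂ n₂ (1−α), ν₁₁ n₁ + ν₁₂ n₂, ν₁₂ n₁ (m₁/m₂)(1−δ), ν₁₂ n₁ (1−α), ν₂₂ n₂ + ν₁₂ n₁ }. Then for all t ≥ 0: (1/n₁) ‖a(t)‖²_{ℓ²} + (1/n₂) ‖b(t)‖²_{ℓ²} ≤ e^{−C t} · ( (1/n₁) ‖a(0)‖²_{ℓ²} + (1/n₂) ‖b(0)‖²_{ℓ²} ). -/

import Mathlib

/-- Diagonal entries of the operator `L₁₂ = L₂₂ = diag(0,0,0,1,1,…)`. -/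
noncomputable def bgkDiagL12 (j : ℕ) : ℝ := if 3 ≤ j then 1 else 0

/-- Diagonal entries of `L₁₃ = diag(0, 1−δ, 1−α, 1, 1, …)`. -/
def bgkDiagL13 (δ α : ℝ) : ℕ → ℝ
  | 0 => 0
  | 1 => 1 - δ
  | 2 => 1 - α
  | _ => 1

/-- Diagonal entries of `L₁₄ = diag(0, (1−δ)(n₁/n₂)√(m₁/m₂), (1−α)(n₁/n₂), 0, 0, …)`. -/
noncomputable def bgkDiagL14 (m₁ m₂ n₁ n₂ δ α : ℝ) : ℕ → ℝ
  | 0 => 0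
  | 1 => (1 - δ) * (n₁ / n₂) * Real.sqrt (m₁ / m₂)
  | 2 => (1 - α) * (n₁ / n₂)
  | _ => 0

/-- Diagonal entries of `L₂₃ = diag(0, (m₁/m₂)ε(1−δ), ε(1−α), 1, 1, …)`. -/
noncomputable def bgkDiagL23 (m₁ m₂ ε δ α : ℝ) : ℕ → ℝ
  | 0 => 0
  | 1 => (m₁ / m₂) * ε * (1 - δ)
  | 2 => ε * (1 - α)
  | _ => 1

/-- Diagonal entries of `L₂₄ = diag(0, (n₂/n₁)√(m₁/m₂)ε(1−δ), (n₂/n₁)ε(1−α), 0, 0, …)`. -/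
noncomputable def bgkDiagL24 (m₁ m₂ n₁ n₂ ε δ α : ℝ) : ℕ → ℝ
  | 0 => 0
  | 1 => (n₂ / n₁) * Real.sqrt (m₁ / m₂) * ε * (1 - δ)
  | 2 => (n₂ / n₁) * ε * (1 - α)
  | _ => 0

namespace BGKAux

noncomputable def coordCLM (j : ℕ) : lp (fun _ : ℕ => ℂ) 2 →L[ℝ] ℂ :=
  LinearMap.mkContinuous
    { toFun := fun f => f j
      map_add' := fun f g => by exact congrFun (lp.coeFn_add f g) j
      map_smul' := fun c f => by exact congrFun (lp.coeFn_smul c f) j }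
    1 (fun f => by simpa using lp.norm_apply_le_norm two_ne_zero f j)

lemma re_conj_mul (c : ℝ) (x : ℂ) : ((starRingEnd ℂ) x * ((c:ℂ) * x)).re = c * ‖x‖^2 := by
  rw [← Complex.normSq_eq_norm_sq, Complex.normSq_apply]
  simp [Complex.mul_re]
  ring

lemma norm_sq_coord (x : ℂ) : ((starRingEnd ℂ) x * x).re = ‖x‖^2 := by
  have := re_conj_mul 1 x
  simpa using this

lemma summable_re (f g : lp (fun _ : ℕ => ℂ) 2) :
    Summable (fun j => ((starRingEnd ℂ) (f j) * g j).re) := by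
  have := Complex.reCLM.summable (lp.summable_inner f g)
  simpa [mul_comm] using this

lemma re_inner_eq (f g : lp (fun _ : ℕ => ℂ) 2) :
    (inner (𝕜 := ℂ) f g).re = ∑' j, ((starRingEnd ℂ) (f j) * g j).re := by
  have : Complex.reCLM (inner (𝕜 := ℂ) f g)
      = ∑' j, Complex.reCLM ((starRingEnd ℂ) (f j) * g j) := by
    rw [lp.inner_eq_tsum, Complex.reCLM.map_tsum (lp.summable_inner f g)]
    simp [mul_comm]
  simpa using this

lemma summable_norm_sq (f : lp (fun _ : ℕ => ℂ) 2) :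
    Summable (fun j => ‖f j‖^2) :=
  (summable_re f f).congr (fun j => norm_sq_coord (f j))

lemma lp_norm_sq (f : lp (fun _ : ℕ => ℂ) 2) : ‖f‖^2 = ∑' j, ‖f j‖^2 := by
  rw [← inner_self_eq_norm_sq (𝕜 := ℂ) (x := f)]
  rw [RCLike.re_to_complex, re_inner_eq]
  exact tsum_congr fun j => norm_sq_coord (f j)

lemma hasDerivAt_norm_sq (a : ℝ → lp (fun _ : ℕ => ℂ) 2) (v : lp (fun _ : ℕ => ℂ) 2)
    (t : ℝ) (h : HasDerivAt a v t) :
    HasDerivAt (fun u => ‖a u‖^2) (2 * (inner (𝕜 := ℂ) (a t) v).re) t := by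
  have h1 := (h.inner ℂ h)
  have h2 := Complex.reCLM.hasFDerivAt.comp_hasDerivAt t h1
  have hsymm : (inner (𝕜:=ℂ) v (a t)).re = (inner (𝕜:=ℂ) (a t) v).re := by
    simpa using inner_re_symm (𝕜 := ℂ) v (a t)
  have h3 : Complex.reCLM (inner (𝕜:=ℂ) (a t) v + inner (𝕜:=ℂ) v (a t))
      = 2 * (inner (𝕜 := ℂ) (a t) v).re := by
    simp only [map_add, Complex.reCLM_apply, hsymm]; ring
  rw [h3] at h2
  refine HasDerivAt.congr_of_eventuallyEq h2 (Filter.Eventually.of_forall fun u => ?_)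
  exact (inner_self_eq_norm_sq (𝕜 := ℂ) (a u)).symm

lemma const_of_deriv_zero (φ : ℝ → ℂ) (h : ∀ t : ℝ, 0 ≤ t → HasDerivAt φ 0 t)
    (t : ℝ) (ht : 0 ≤ t) : φ t = φ 0 :=
  constant_of_has_deriv_right_zero
    (fun x hx => (h x hx.1).continuousAt.continuousWithinAt)
    (fun x hx => (h x hx.1).hasDerivWithinAt) t ⟨ht, le_rfl⟩

end BGKAux

set_option maxHeartbeats 2000000 in
/-- Exponential decay of the spatially homogeneous (k = 0) Fourier mode of the
linearized two-species BGK system: if `a, b : [0,∞) → ℓ²(ℕ,ℂ)` solve the zero-mode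
system with the conservation constraints at `t = 0`, then for all `t ≥ 0`,
`(1/n₁)‖a(t)‖² + (1/n₂)‖b(t)‖² ≤ e^{−Ct}((1/n₁)‖a(0)‖² + (1/n₂)‖b(0)‖²)` with
`C = 2 min{ν₁₂n₂(1−δ), ν₁₂n₂(1−α), ν₁₁n₁+ν₁₂n₂, ν₁₂n₁(m₁/m₂)(1−δ), ν₁₂n₁(1−α), ν₂₂n₂+ν₁₂n₁}`. -/
theorem zero_mode_exponential_decay (m₁ m₂ n₁ n₂ ν₁₁ ν₁₂ ν₂₂ ν₂₁ ε δ α : ℝ)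
    (hm₁ : 0 < m₁) (hm₂ : 0 < m₂) (hn₁ : 0 < n₁) (hn₂ : 0 < n₂)
    (hν₁₁ : 0 < ν₁₁) (hν₁₂ : 0 < ν₁₂) (hν₂₂ : 0 < ν₂₂) (hν₂₁ : 0 < ν₂₁)
    (hcoll : ν₁₂ = ε * ν₂₁) (hε0 : 0 < ε) (hε1 : ε ≤ 1) (hδ : δ ≤ 1) (hα : α ≤ 1)
    (a b a' b' : ℝ → lp (fun _ : ℕ => ℂ) 2)
    (hda : ∀ t : ℝ, 0 ≤ t → HasDerivAt a (a' t) t)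
    (hdb : ∀ t : ℝ, 0 ≤ t → HasDerivAt b (b' t) t)
    (heqa : ∀ t : ℝ, 0 ≤ t → ∀ j : ℕ,
      a' t j = -(ν₁₁ * n₁ * bgkDiagL12 j : ℝ) * a t j
        - (ν₁₂ * n₂ * bgkDiagL13 δ α j : ℝ) * a t j
        + (ν₁₂ * n₂ * bgkDiagL14 m₁ m₂ n₁ n₂ δ α j : ℝ) * b t j)
    (heqb : ∀ t : ℝ, 0 ≤ t → ∀ j : ℕ,
      b' t j = -(ν₂₂ * n₂ * bgkDiagL12 j : ℝ) * b t j
        - (ν₂₁ * n₁ * bgkDiagL23 m₁ m₂ ε δ α j : ℝ) * b t j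
        + (ν₂₁ * n₁ * bgkDiagL24 m₁ m₂ n₁ n₂ ε δ α j : ℝ) * a t j)
    (ha0 : a 0 0 = 0) (hb0 : b 0 0 = 0)
    (hmom : (Real.sqrt m₁ : ℂ) * a 0 1 + (Real.sqrt m₂ : ℂ) * b 0 1 = 0)
    (hen : a 0 2 + b 0 2 = 0) :
    ∀ t : ℝ, 0 ≤ t →
      (1 / n₁) * ‖a t‖ ^ 2 + (1 / n₂) * ‖b t‖ ^ 2 ≤
        Real.exp (-(2 * min (ν₁₂ * n₂ * (1 - δ))
            (min (ν₁₂ * n₂ * (1 - α))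
              (min (ν₁₁ * n₁ + ν₁₂ * n₂)
                (min (ν₁₂ * n₁ * (m₁ / m₂) * (1 - δ))
                  (min (ν₁₂ * n₁ * (1 - α)) (ν₂₂ * n₂ + ν₁₂ * n₁)))))) * t) *
          ((1 / n₁) * ‖a 0‖ ^ 2 + (1 / n₂) * ‖b 0‖ ^ 2) := by
  intro T hT
  -- abbreviations
  set C := min (ν₁₂ * n₂ * (1 - δ))
      (min (ν₁₂ * n₂ * (1 - α))
        (min (ν₁₁ * n₁ + ν₁₂ * n₂)
          (min (ν₁₂ * n₁ * (m₁ / m₂) * (1 - δ))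
            (min (ν₁₂ * n₁ * (1 - α)) (ν₂₂ * n₂ + ν₁₂ * n₁))))) with hCdef
  have hC1 : C ≤ ν₁₂ * n₂ * (1 - δ) := min_le_left _ _
  have hC2 : C ≤ ν₁₂ * n₂ * (1 - α) := le_trans (min_le_right _ _) (min_le_left _ _)
  have hC3 : C ≤ ν₁₁ * n₁ + ν₁₂ * n₂ :=
    le_trans (min_le_right _ _) (le_trans (min_le_right _ _) (min_le_left _ _))
  have hC4 : C ≤ ν₁₂ * n₁ * (m₁ / m₂) * (1 - δ) :=
    le_trans (min_le_right _ _) (le_trans (min_le_right _ _)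
      (le_trans (min_le_right _ _) (min_le_left _ _)))
  have hC5 : C ≤ ν₁₂ * n₁ * (1 - α) :=
    le_trans (min_le_right _ _) (le_trans (min_le_right _ _)
      (le_trans (min_le_right _ _) (le_trans (min_le_right _ _) (min_le_left _ _))))
  have hC6 : C ≤ ν₂₂ * n₂ + ν₁₂ * n₁ :=
    le_trans (min_le_right _ _) (le_trans (min_le_right _ _)
      (le_trans (min_le_right _ _) (le_trans (min_le_right _ _) (min_le_right _ _))))
  -- sqrt facts
  set s : ℝ := Real.sqrt (m₁ / m₂) with hs
  have h1 : Real.sqrt m₁ * Real.sqrt m₁ = m₁ := Real.mul_self_sqrt hm₁.le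
  have h2 : Real.sqrt m₂ * Real.sqrt m₂ = m₂ := Real.mul_self_sqrt hm₂.le
  have hss : s * s = m₁ / m₂ := Real.mul_self_sqrt (by positivity)
  have hsm₂ : s * Real.sqrt m₂ = Real.sqrt m₁ := by
    rw [hs, ← Real.sqrt_mul (by positivity), div_mul_cancel₀ _ hm₂.ne']
  have hsm : s * Real.sqrt m₁ * m₂ = Real.sqrt m₂ * m₁ := by
    linear_combination (-(s * Real.sqrt m₁)) * h2 + (Real.sqrt m₁ * Real.sqrt m₂) * hsm₂
      + Real.sqrt m₂ * h1
  have hsqm₂ : (0:ℝ) < Real.sqrt m₂ := Real.sqrt_pos.mpr hm₂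
  have hsqm₂c : (Real.sqrt m₂ : ℂ) ≠ 0 := by exact_mod_cast hsqm₂.ne'
  have hsm₂c : (s : ℂ) * (Real.sqrt m₂ : ℂ) = (Real.sqrt m₁ : ℂ) := by exact_mod_cast hsm₂
  have hn₁c : (n₁ : ℂ) ≠ 0 := by exact_mod_cast hn₁.ne'
  have hn₂c : (n₂ : ℂ) ≠ 0 := by exact_mod_cast hn₂.ne'
  have hm₁c : (m₁ : ℂ) ≠ 0 := by exact_mod_cast hm₁.ne'
  have hm₂c : (m₂ : ℂ) ≠ 0 := by exact_mod_cast hm₂.ne'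
  -- coordinate derivatives
  have hdA : ∀ (j : ℕ) (t : ℝ), 0 ≤ t → HasDerivAt (fun u => a u j) (a' t j) t :=
    fun j t ht => (BGKAux.coordCLM j).hasFDerivAt.comp_hasDerivAt t (hda t ht)
  have hdB : ∀ (j : ℕ) (t : ℝ), 0 ≤ t → HasDerivAt (fun u => b u j) (b' t j) t :=
    fun j t ht => (BGKAux.coordCLM j).hasFDerivAt.comp_hasDerivAt t (hdb t ht)
  -- invariants
  have hza : ∀ t : ℝ, 0 ≤ t → a t 0 = 0 := by
    intro t ht
    have h : ∀ u : ℝ, 0 ≤ u → HasDerivAt (fun u => a u 0) 0 u := by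
      intro u hu
      have hz : a' u 0 = 0 := by
        rw [heqa u hu 0]; norm_num [bgkDiagL12, bgkDiagL13, bgkDiagL14]
      exact hz ▸ hdA 0 u hu
    rw [BGKAux.const_of_deriv_zero _ h t ht, ha0]
  have hzb : ∀ t : ℝ, 0 ≤ t → b t 0 = 0 := by
    intro t ht
    have h : ∀ u : ℝ, 0 ≤ u → HasDerivAt (fun u => b u 0) 0 u := by
      intro u hu
      have hz : b' u 0 = 0 := by
        rw [heqb u hu 0]; norm_num [bgkDiagL12, bgkDiagL23, bgkDiagL24]
      exact hz ▸ hdB 0 u hu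
    rw [BGKAux.const_of_deriv_zero _ h t ht, hb0]
  have hmomt : ∀ t : ℝ, 0 ≤ t →
      (Real.sqrt m₁ : ℂ) * a t 1 + (Real.sqrt m₂ : ℂ) * b t 1 = 0 := by
    intro t ht
    have h : ∀ u : ℝ, 0 ≤ u →
        HasDerivAt (fun u => (Real.sqrt m₁ : ℂ) * a u 1 + (Real.sqrt m₂ : ℂ) * b u 1) 0 u := by
      intro u hu
      have hd := ((hdA 1 u hu).const_mul ((Real.sqrt m₁ : ℂ))).add
        ((hdB 1 u hu).const_mul ((Real.sqrt m₂ : ℂ)))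
      have hz : (Real.sqrt m₁ : ℂ) * a' u 1 + (Real.sqrt m₂ : ℂ) * b' u 1 = 0 := by
        rw [heqa u hu 1, heqb u hu 1]
        norm_num [bgkDiagL12, bgkDiagL13, bgkDiagL14, bgkDiagL23, bgkDiagL24]
        have k₁ : Real.sqrt m₁ * (-(ν₁₂ * n₂ * (1-δ)))
            + Real.sqrt m₂ * (ν₂₁ * n₁ * ((n₂/n₁) * s * ε * (1-δ))) = 0 := by
          have hnn₁ : n₁ * (n₂ / n₁) = n₂ := by field_simp
          subst hcoll
          linear_combination (ε*ν₂₁*n₂*(1-δ)) * hsm₂ + (Real.sqrt m₂*ν₂₁*s*ε*(1-δ)) * hnn₁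
        have k₂ : Real.sqrt m₁ * (ν₁₂ * n₂ * ((1-δ) * (n₁/n₂) * s))
            + Real.sqrt m₂ * (-(ν₂₁ * n₁ * ((m₁/m₂) * ε * (1-δ)))) = 0 := by
          have hnn₂ : n₂ * (n₁ / n₂) = n₁ := by field_simp
          have hq : s * Real.sqrt m₁ = Real.sqrt m₂ * (m₁ / m₂) := by
            rw [eq_comm, mul_div_assoc', div_eq_iff hm₂.ne']; linear_combination -hsm
          subst hcoll
          linear_combination (ε*ν₂₁*(1-δ)*s*Real.sqrt m₁) * hnn₂ + (ε*ν₂₁*(1-δ)*n₁) * hq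
        have k₁c := congrArg (Complex.ofReal) k₁
        have k₂c := congrArg (Complex.ofReal) k₂
        push_cast at k₁c k₂c ⊢
        linear_combination (a u 1) * k₁c + (b u 1) * k₂c
      exact hz ▸ hd
    rw [BGKAux.const_of_deriv_zero _ h t ht, hmom]
  have hent : ∀ t : ℝ, 0 ≤ t → a t 2 + b t 2 = 0 := by
    intro t ht
    have h : ∀ u : ℝ, 0 ≤ u → HasDerivAt (fun u => a u 2 + b u 2) 0 u := by
      intro u hu
      have hd := (hdA 2 u hu).add (hdB 2 u hu)
      have hz : a' u 2 + b' u 2 = 0 := by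
        rw [heqa u hu 2, heqb u hu 2]
        norm_num [bgkDiagL12, bgkDiagL13, bgkDiagL14, bgkDiagL23, bgkDiagL24]
        subst hcoll
        push_cast
        field_simp
        ring
      exact hz ▸ hd
    rw [BGKAux.const_of_deriv_zero _ h t ht, hen]
  -- pointwise relations derived from invariants
  have hB1 : ∀ t : ℝ, 0 ≤ t → (s : ℂ) * a t 1 + b t 1 = 0 := by
    intro t ht
    have h := hmomt t ht
    have hmul : (Real.sqrt m₂ : ℂ) * ((s : ℂ) * a t 1 + b t 1) = 0 := by
      linear_combination h + (a t 1) * hsm₂c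
    exact (mul_eq_zero.mp hmul).resolve_left hsqm₂c
  -- scalar form of the ODE in each coordinate
  have hA1 : ∀ t : ℝ, 0 ≤ t →
      a' t 1 = ((-(ν₁₂ * (1-δ) * (n₂ + n₁ * (m₁/m₂))) : ℝ) : ℂ) * a t 1 := by
    intro t ht
    have hb1 : b t 1 = -((s : ℂ) * a t 1) := eq_neg_of_add_eq_zero_right (hB1 t ht)
    rw [heqa t ht 1, hb1]
    have e12 : bgkDiagL12 1 = 0 := by norm_num [bgkDiagL12]
    have e13 : bgkDiagL13 δ α 1 = 1 - δ := rfl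
    have e14 : bgkDiagL14 m₁ m₂ n₁ n₂ δ α 1 = (1-δ) * (n₁/n₂) * s := rfl
    rw [e12, e13, e14]
    have hnn₂ : n₂ * (n₁ / n₂) = n₁ := by field_simp
    have k : -(ν₁₂ * n₂ * (1-δ)) + (ν₁₂ * n₂ * ((1-δ) * (n₁/n₂) * s)) * (-s)
        = -(ν₁₂ * (1-δ) * (n₂ + n₁ * (m₁/m₂))) := by
      linear_combination (-(ν₁₂*(1-δ)*s*s)) * hnn₂ + (-(ν₁₂*(1-δ)*n₁)) * hss
    have kc := congrArg (Complex.ofReal) k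
    push_cast at kc ⊢
    linear_combination (a t 1) * kc
  have hspos : (0:ℝ) < s := Real.sqrt_pos.mpr (by positivity)
  have hsc : (s:ℂ) ≠ 0 := by exact_mod_cast hspos.ne'
  set r : ℝ := Real.sqrt (m₂ / m₁) with hr
  have hsr : s * r = 1 := by
    rw [hs, hr, ← Real.sqrt_mul (by positivity),
      show m₁ / m₂ * (m₂ / m₁) = 1 by field_simp, Real.sqrt_one]
  have hsrc : (s:ℂ) * (r:ℂ) = 1 := by exact_mod_cast hsr
  have hA1' : ∀ t : ℝ, 0 ≤ t →
      b' t 1 = ((-(ν₁₂ * (1-δ) * (n₂ + n₁ * (m₁/m₂))) : ℝ) : ℂ) * b t 1 := by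
    intro t ht
    have hrel := hB1 t ht
    have ha1 : a t 1 = -(r:ℂ) * b t 1 := by
      have h0 : (s:ℂ) * (a t 1 - (-(r:ℂ) * b t 1)) = 0 := by
        linear_combination hrel + (b t 1) * hsrc
      exact sub_eq_zero.mp ((mul_eq_zero.mp h0).resolve_left hsc)
    rw [heqb t ht 1, ha1]
    have e12 : bgkDiagL12 1 = 0 := by norm_num [bgkDiagL12]
    have e23 : bgkDiagL23 m₁ m₂ ε δ α 1 = (m₁/m₂) * ε * (1-δ) := rfl
    have e24 : bgkDiagL24 m₁ m₂ n₁ n₂ ε δ α 1 = (n₂/n₁) * s * ε * (1-δ) := rfl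
    rw [e12, e23, e24]
    have k : -(ν₂₁ * n₁ * ((m₁/m₂) * ε * (1-δ)))
        + (ν₂₁ * n₁ * ((n₂/n₁) * s * ε * (1-δ))) * (-r)
        = -(ν₁₂ * (1-δ) * (n₂ + n₁ * (m₁/m₂))) := by
      have hnn₁ : n₁ * (n₂ / n₁) = n₂ := by field_simp
      subst hcoll
      linear_combination (-(ν₂₁*ε*(1-δ)*s*r)) * hnn₁ + (-(ν₂₁*ε*(1-δ)*n₂)) * hsr
    have kc := congrArg (Complex.ofReal) k
    push_cast at kc ⊢
    linear_combination (b t 1) * kc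
  have hA2 : ∀ t : ℝ, 0 ≤ t →
      a' t 2 = ((-(ν₁₂ * (1-α) * (n₂ + n₁)) : ℝ) : ℂ) * a t 2 := by
    intro t ht
    have hb2 : b t 2 = -(a t 2) := eq_neg_of_add_eq_zero_right (hent t ht)
    rw [heqa t ht 2, hb2]
    norm_num [bgkDiagL12, bgkDiagL13, bgkDiagL14]
    push_cast
    field_simp
    ring
  have hA2' : ∀ t : ℝ, 0 ≤ t →
      b' t 2 = ((-(ν₁₂ * (1-α) * (n₂ + n₁)) : ℝ) : ℂ) * b t 2 := by
    intro t ht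
    have ha2 : a t 2 = -(b t 2) := eq_neg_of_add_eq_zero_left (hent t ht)
    rw [heqb t ht 2, ha2]
    have e12 : bgkDiagL12 2 = 0 := by norm_num [bgkDiagL12]
    have e23 : bgkDiagL23 m₁ m₂ ε δ α 2 = ε * (1-α) := rfl
    have e24 : bgkDiagL24 m₁ m₂ n₁ n₂ ε δ α 2 = (n₂/n₁) * ε * (1-α) := rfl
    rw [e12, e23, e24]
    have k : -(ν₂₁ * n₁ * (ε * (1-α))) + (ν₂₁ * n₁ * ((n₂/n₁) * ε * (1-α))) * (-1)
        = -(ν₁₂ * (1-α) * (n₂ + n₁)) := by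
      subst hcoll
      field_simp
      ring
    have kc := congrArg (Complex.ofReal) k
    push_cast at kc ⊢
    linear_combination (b t 2) * kc
  have hA3 : ∀ t : ℝ, 0 ≤ t → ∀ k : ℕ,
      a' t (k+3) = ((-(ν₁₁ * n₁ + ν₁₂ * n₂) : ℝ) : ℂ) * a t (k+3) := by
    intro t ht k
    rw [heqa t ht (k+3)]
    have h12 : bgkDiagL12 (k+3) = 1 := by simp [bgkDiagL12]
    have h13 : bgkDiagL13 δ α (k+3) = 1 := rfl
    have h14 : bgkDiagL14 m₁ m₂ n₁ n₂ δ α (k+3) = 0 := rfl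
    rw [h12, h13, h14]
    push_cast
    ring
  have hB3 : ∀ t : ℝ, 0 ≤ t → ∀ k : ℕ,
      b' t (k+3) = ((-(ν₂₂ * n₂ + ν₂₁ * n₁) : ℝ) : ℂ) * b t (k+3) := by
    intro t ht k
    rw [heqb t ht (k+3)]
    have h12 : bgkDiagL12 (k+3) = 1 := by simp [bgkDiagL12]
    have h23 : bgkDiagL23 m₁ m₂ ε δ α (k+3) = 1 := rfl
    have h24 : bgkDiagL24 m₁ m₂ n₁ n₂ ε δ α (k+3) = 0 := rfl
    rw [h12, h23, h24]
    push_cast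
    ring
  -- the pointwise decay estimates
  have hδ' : (0:ℝ) ≤ 1 - δ := by linarith
  have hα' : (0:ℝ) ≤ 1 - α := by linarith
  have hμ1 : C ≤ ν₁₂ * (1-δ) * (n₂ + n₁ * (m₁/m₂)) := by
    have h0 : (0:ℝ) ≤ ν₁₂ * (1-δ) * (n₁ * (m₁/m₂)) := by positivity
    nlinarith [hC1]
  have hμ2 : C ≤ ν₁₂ * (1-α) * (n₂ + n₁) := by
    have h0 : (0:ℝ) ≤ ν₁₂ * (1-α) * n₁ := by positivity
    nlinarith [hC2]
  have hμ3b : C ≤ ν₂₂ * n₂ + ν₂₁ * n₁ := by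
    nlinarith [hC6, mul_pos hν₂₁ hn₁, hε1]
  have keyA : ∀ t : ℝ, 0 ≤ t → ∀ j : ℕ,
      ((starRingEnd ℂ) (a t j) * a' t j).re ≤ -C * ‖a t j‖^2 := by
    intro t ht j
    match j with
    | 0 => rw [hza t ht]; simp
    | 1 =>
      rw [hA1 t ht, BGKAux.re_conj_mul]
      nlinarith [mul_nonneg (sub_nonneg.mpr hμ1) (sq_nonneg ‖a t 1‖)]
    | 2 =>
      rw [hA2 t ht, BGKAux.re_conj_mul]
      nlinarith [mul_nonneg (sub_nonneg.mpr hμ2) (sq_nonneg ‖a t 2‖)]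
    | (k+3) =>
      rw [hA3 t ht k, BGKAux.re_conj_mul]
      nlinarith [mul_nonneg (sub_nonneg.mpr hC3) (sq_nonneg ‖a t (k+3)‖)]
  have keyB : ∀ t : ℝ, 0 ≤ t → ∀ j : ℕ,
      ((starRingEnd ℂ) (b t j) * b' t j).re ≤ -C * ‖b t j‖^2 := by
    intro t ht j
    match j with
    | 0 => rw [hzb t ht]; simp
    | 1 =>
      rw [hA1' t ht, BGKAux.re_conj_mul]
      nlinarith [mul_nonneg (sub_nonneg.mpr hμ1) (sq_nonneg ‖b t 1‖)]
    | 2 =>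
      rw [hA2' t ht, BGKAux.re_conj_mul]
      nlinarith [mul_nonneg (sub_nonneg.mpr hμ2) (sq_nonneg ‖b t 2‖)]
    | (k+3) =>
      rw [hB3 t ht k, BGKAux.re_conj_mul]
      nlinarith [mul_nonneg (sub_nonneg.mpr hμ3b) (sq_nonneg ‖b t (k+3)‖)]
  -- summed estimates
  have hIa : ∀ t : ℝ, 0 ≤ t → (inner (𝕜 := ℂ) (a t) (a' t)).re ≤ -C * ‖a t‖^2 := by
    intro t ht
    rw [BGKAux.re_inner_eq, BGKAux.lp_norm_sq, ← tsum_mul_left]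
    exact Summable.tsum_le_tsum (fun j => keyA t ht j) (BGKAux.summable_re _ _)
      ((BGKAux.summable_norm_sq (a t)).mul_left _)
  have hIb : ∀ t : ℝ, 0 ≤ t → (inner (𝕜 := ℂ) (b t) (b' t)).re ≤ -C * ‖b t‖^2 := by
    intro t ht
    rw [BGKAux.re_inner_eq, BGKAux.lp_norm_sq, ← tsum_mul_left]
    exact Summable.tsum_le_tsum (fun j => keyB t ht j) (BGKAux.summable_re _ _)
      ((BGKAux.summable_norm_sq (b t)).mul_left _)
  -- the Lyapunov functional
  set F : ℝ → ℝ := fun u => 1 / n₁ * ‖a u‖ ^ 2 + 1 / n₂ * ‖b u‖ ^ 2 with hFdef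
  have hFd : ∀ t : ℝ, 0 ≤ t → HasDerivAt F
      (1 / n₁ * (2 * (inner (𝕜 := ℂ) (a t) (a' t)).re)
        + 1 / n₂ * (2 * (inner (𝕜 := ℂ) (b t) (b' t)).re)) t := fun t ht =>
    ((BGKAux.hasDerivAt_norm_sq a (a' t) t (hda t ht)).const_mul _).add
      ((BGKAux.hasDerivAt_norm_sq b (b' t) t (hdb t ht)).const_mul _)
  have hFle : ∀ t : ℝ, 0 ≤ t →
      1 / n₁ * (2 * (inner (𝕜 := ℂ) (a t) (a' t)).re)
        + 1 / n₂ * (2 * (inner (𝕜 := ℂ) (b t) (b' t)).re) ≤ -(2*C) * F t := by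
    intro t ht
    have ia := hIa t ht
    have ib := hIb t ht
    have h1 : (0:ℝ) < 1/n₁ := by positivity
    have h2 : (0:ℝ) < 1/n₂ := by positivity
    have ha2 := mul_le_mul_of_nonneg_left ia h1.le
    have hb2 := mul_le_mul_of_nonneg_left ib h2.le
    simp only [hFdef]
    nlinarith [ha2, hb2]
  -- Gronwall via monotonicity
  have hG : AntitoneOn (fun u => Real.exp (2*C*u) * F u) (Set.Ici (0:ℝ)) := by
    have hFc : ContinuousOn F (Set.Ici (0:ℝ)) :=
      fun x hx => (hFd x hx).continuousAt.continuousWithinAt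
    apply antitoneOn_of_deriv_nonpos (convex_Ici 0)
    · exact ((Real.continuous_exp.comp (continuous_const.mul continuous_id)).continuousOn.mul hFc)
    · rw [interior_Ici]
      intro x hx
      have he : HasDerivAt (fun u : ℝ => Real.exp (2*C*u)) (Real.exp (2*C*x) * (2*C*1)) x :=
        ((hasDerivAt_id x).const_mul (2*C)).exp
      exact (he.mul (hFd x (le_of_lt hx))).differentiableAt.differentiableWithinAt
    · rw [interior_Ici]
      intro x hx
      have he : HasDerivAt (fun u : ℝ => Real.exp (2*C*u)) (Real.exp (2*C*x) * (2*C*1)) x :=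
        ((hasDerivAt_id x).const_mul (2*C)).exp
      have hd : HasDerivAt (fun u => Real.exp (2*C*u) * F u) _ x := he.mul (hFd x (le_of_lt hx))
      rw [hd.deriv]
      have hle := hFle x (le_of_lt hx)
      nlinarith [Real.exp_pos (2*C*x), hle,
        mul_le_mul_of_nonneg_left hle (Real.exp_pos (2*C*x)).le]
  have hmono : Real.exp (2*C*T) * F T ≤ Real.exp (2*C*0) * F 0 :=
    hG (Set.self_mem_Ici) (Set.mem_Ici.mpr hT) hT
  have hG0 : Real.exp (2*C*0) * F 0 = F 0 := by norm_num
  rw [hG0] at hmono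
  show F T ≤ Real.exp (-(2*C) * T) * F 0
  have hexp : Real.exp (-(2*C) * T) = (Real.exp (2*C*T))⁻¹ := by
    rw [show -(2*C)*T = -(2*C*T) by ring, Real.exp_neg]
  rw [hexp, inv_mul_eq_div, le_div_iff₀ (Real.exp_pos _)]
  calc F T * Real.exp (2*C*T) = Real.exp (2*C*T) * F T := by ring
    _ ≤ F 0 := hmono
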